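/- Let H_* ⊆ [p]^n be nonempty, finite and downward closed (with respect to the coordinatewise order on [p]^n with p ≥ 1, where [p] = {1,…,p} is ordered as usual). Then the average degree of H_* in its one-inclusion graph satisfies avd(H_*) ≤ 2·d_E(H_*), where d_E is the exponential dimension. -/

import Mathlib

open Finset

/-- The edge of the one-inclusion graph of `H ⊆ [p]^n` in direction `i` through `g`:
all members of `H` agreeing with `g` off coordinate `i`. -/
def edgeF {n p : ℕ} (H : Finset (Fin n → Fin p)) (i : Fin n) (g : Fin n → Fin p) :
    Finset (Fin n → Fin p) :=
  H.filter (fun h => ∀ j, j ≠ i → h j = g j)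

/-- The shifting operator in direction `i`: each edge is pushed downward, i.e. replaced by
the words agreeing with its pattern off `i` whose `i`-th coordinate is among the
`|e|` smallest values. -/
def shift {n p : ℕ} (i : Fin n) (H : Finset (Fin n → Fin p)) : Finset (Fin n → Fin p) :=
  Finset.univ.filter (fun g => (g i).val < (edgeF H i g).card)

/-- The projection of `H` to a sequence `S` of coordinates. -/
def projF {n p k : ℕ} (H : Finset (Fin n → Fin p)) (S : Fin k → Fin n) :
    Finset (Fin k → Fin p) :=
  H.image (fun h => fun j => h (S j))

/-- `H` E-shatters size `k` if some sequence of `k` coordinates has projection of size `≥ 2^k`. -/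
def EShatters {n p : ℕ} (H : Finset (Fin n → Fin p)) (k : ℕ) : Prop :=
  ∃ S : Fin k → Fin n, 2 ^ k ≤ (projF H S).card

/-- The exponential dimension: the largest `k` that `H` E-shatters. -/
noncomputable def dE {n p : ℕ} (H : Finset (Fin n → Fin p)) : ℕ :=
  sSup {k | EShatters H k}

/-- The number of edges of the one-inclusion graph of `H` in direction `j`
(equivalently, the number of distinct patterns of `H` off coordinate `j`). -/
def numEdges {n p : ℕ} (H : Finset (Fin n → Fin p)) (j : Fin n) : ℕ :=
  (H.image (fun h => fun k : {k : Fin n // k ≠ j} => h k.1)).card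

/-- `avd'(H) = (1/|H|) Σ_{e ∈ E} (|e| − 1)`, over all edges including singletons. -/
def avd' {n p : ℕ} (H : Finset (Fin n → Fin p)) : ℚ :=
  (∑ j : Fin n, ((H.card : ℚ) - (numEdges H j : ℚ))) / (H.card : ℚ)

/-- The degree of `v`: the number of non-singleton edges of the one-inclusion graph
containing `v`. -/
def deg {n p : ℕ} (H : Finset (Fin n → Fin p)) (v : Fin n → Fin p) : ℕ :=
  (Finset.univ.filter (fun j : Fin n => 2 ≤ (edgeF H j v).card)).card

/-- The average degree of the one-inclusion graph of `H`. -/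
def avd {n p : ℕ} (H : Finset (Fin n → Fin p)) : ℚ :=
  (∑ v ∈ H, (deg H v : ℚ)) / (H.card : ℚ)

namespace AvdAux

variable {n p : ℕ}

lemma mem_edgeF {H : Finset (Fin n → Fin p)} {i : Fin n} {g h : Fin n → Fin p} :
    h ∈ edgeF H i g ↔ h ∈ H ∧ ∀ j, j ≠ i → h j = g j := by
  simp [edgeF]

lemma self_mem_edgeF {H : Finset (Fin n → Fin p)} {i : Fin n} {g : Fin n → Fin p}
    (hg : g ∈ H) : g ∈ edgeF H i g :=
  mem_edgeF.2 ⟨hg, fun _ _ => rfl⟩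

lemma edgeF_congr {H : Finset (Fin n → Fin p)} {i : Fin n} {v w : Fin n → Fin p}
    (hvw : ∀ j, j ≠ i → v j = w j) : edgeF H i v = edgeF H i w := by
  ext h
  simp only [mem_edgeF]
  constructor <;> rintro ⟨hH, ha⟩
  · exact ⟨hH, fun j hj => (ha j hj).trans (hvw j hj)⟩
  · exact ⟨hH, fun j hj => (ha j hj).trans (hvw j hj).symm⟩

lemma edgeF_erase (H : Finset (Fin n → Fin p)) (i : Fin n) (g h₀ : Fin n → Fin p) :
    edgeF (H.erase h₀) i g = (edgeF H i g).erase h₀ := by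
  ext h
  simp only [edgeF, Finset.mem_filter, Finset.mem_erase]
  tauto

lemma bddAbove_shatters (H : Finset (Fin n → Fin p)) : BddAbove {k | EShatters H k} := by
  refine ⟨H.card, fun k hk => ?_⟩
  obtain ⟨S, hS⟩ := hk
  have h1 : (projF H S).card ≤ H.card := Finset.card_image_le
  have h2 := Nat.lt_two_pow_self (n := k)
  omega

lemma dE_mono {H' H : Finset (Fin n → Fin p)} (hs : H' ⊆ H) : dE H' ≤ dE H := by
  unfold dE
  rcases Set.eq_empty_or_nonempty {k | EShatters H' k} with he | hnem
  · rw [he, csSup_empty]; exact bot_le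
  · refine csSup_le_csSup (bddAbove_shatters H) hnem ?_
    rintro k ⟨S, hS⟩
    exact ⟨S, hS.trans (Finset.card_le_card (Finset.image_subset_image hs))⟩

lemma sum_deg_eq (H : Finset (Fin n → Fin p)) :
    ∑ v ∈ H, deg H v = ∑ j : Fin n, (H.filter (fun v => 2 ≤ (edgeF H j v).card)).card := by
  unfold deg
  simp_rw [Finset.card_filter]
  rw [Finset.sum_comm]

lemma supp_card_le_dE (H : Finset (Fin n → Fin p))
    (hdc : ∀ h ∈ H, ∀ g : Fin n → Fin p, (∀ i, g i ≤ h i) → g ∈ H)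
    (h₀ : Fin n → Fin p) (h₀H : h₀ ∈ H) :
    (Finset.univ.filter (fun j : Fin n => (h₀ j).val ≠ 0)).card ≤ dE H := by
  set s := Finset.univ.filter (fun j : Fin n => (h₀ j).val ≠ 0) with hs
  have hsh : EShatters H s.card := by
    set e := s.orderIsoOfFin rfl with he
    set S : Fin s.card → Fin n := fun j => (e j : Fin n) with hS
    have hSinj : Function.Injective S := fun a b hab => e.injective (Subtype.ext hab)
    have hSmem : ∀ j, (h₀ (S j)).val ≠ 0 := by
      intro j
      have h2 := (e j).2
      simp only [hs, Finset.mem_filter, Finset.mem_univ, true_and] at h2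
      exact h2
    refine ⟨S, ?_⟩
    set G : (Fin s.card → Bool) → (Fin s.card → Fin p) :=
      fun b j => if b j then h₀ (S j) else ⟨0, Fin.pos (h₀ (S j))⟩ with hG
    have hGmem : ∀ b, G b ∈ projF H S := by
      intro b
      set g : Fin n → Fin p :=
        fun i => if h : ∃ j, S j = i ∧ b j = true then h₀ i else ⟨0, Fin.pos (h₀ i)⟩ with hg
      have hgH : g ∈ H := by
        refine hdc h₀ h₀H g (fun i => ?_)
        by_cases hc : ∃ j, S j = i ∧ b j = true
        · simp [hg, hc]
        · simp only [hg, hc, dif_neg, not_false_iff]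
          exact Fin.mk_le_of_le_val (Nat.zero_le _)
      refine Finset.mem_image.2 ⟨g, hgH, ?_⟩
      funext j
      have hcond : (∃ j', S j' = S j ∧ b j' = true) ↔ b j = true := by
        constructor
        · rintro ⟨j', hj', hb⟩
          rwa [hSinj hj'] at hb
        · exact fun hb => ⟨j, rfl, hb⟩
      by_cases hb : b j = true
      · simp [hg, hG, hcond, hb]
      · simp [hg, hG, hcond, hb]
    have hGinj : Function.Injective G := by
      intro b b' hbb
      funext j
      have hjG : (if b j = true then h₀ (S j) else ⟨0, Fin.pos (h₀ (S j))⟩)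
          = (if b' j = true then h₀ (S j) else ⟨0, Fin.pos (h₀ (S j))⟩) := congrFun hbb j
      cases hb : b j <;> cases hb' : b' j <;> rw [hb, hb'] at hjG
      all_goals first
        | rfl
        | (exfalso
           rw [if_neg (show ¬(false = true) by simp), if_pos rfl] at hjG
           exact hSmem j (congrArg Fin.val hjG).symm)
        | (exfalso
           rw [if_pos rfl, if_neg (show ¬(false = true) by simp)] at hjG
           exact hSmem j (congrArg Fin.val hjG))
    calc 2 ^ s.card = (Finset.univ : Finset (Fin s.card → Bool)).card := by
          simp [Finset.card_univ]
      _ = ((Finset.univ : Finset (Fin s.card → Bool)).image G).card :=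
          (Finset.card_image_of_injective _ hGinj).symm
      _ ≤ (projF H S).card := Finset.card_le_card (by
          intro x hx
          obtain ⟨b, _, rfl⟩ := Finset.mem_image.1 hx
          exact hGmem b)
  exact le_csSup (bddAbove_shatters H) hsh

lemma count_step {H : Finset (Fin n → Fin p)} {h₀ : Fin n → Fin p} (h₀H : h₀ ∈ H) (j : Fin n) :
    (H.filter (fun v => 2 ≤ (edgeF H j v).card)).card ≤
      ((H.erase h₀).filter (fun v => 2 ≤ (edgeF (H.erase h₀) j v).card)).card
        + 2 * (if 2 ≤ (edgeF H j h₀).card then 1 else 0) := by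
  set A := H.filter (fun v => 2 ≤ (edgeF H j v).card) with hA
  set A' := (H.erase h₀).filter (fun v => 2 ≤ (edgeF (H.erase h₀) j v).card) with hA'
  by_cases hP : 2 ≤ (edgeF H j h₀).card
  · rw [if_pos hP]
    have hsdiff : (A \ A').card ≤ 2 := by
      have hsub : A \ A' ⊆ insert h₀ ((A \ A').erase h₀) := by
        intro x hx
        by_cases hxh : x = h₀
        · exact hxh ▸ Finset.mem_insert_self _ _
        · exact Finset.mem_insert_of_mem (Finset.mem_erase.2 ⟨hxh, hx⟩)
      have hone : ((A \ A').erase h₀).card ≤ 1 := by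
        rw [Finset.card_le_one]
        have hkey : ∀ x ∈ (A \ A').erase h₀, (edgeF H j h₀).erase h₀ = {x} := by
          intro x hx
          obtain ⟨hxh, hxd⟩ := Finset.mem_erase.1 hx
          obtain ⟨hxA, hxA'⟩ := Finset.mem_sdiff.1 hxd
          obtain ⟨hxH, hx2⟩ := Finset.mem_filter.1 hxA
          have hxH' : x ∈ H.erase h₀ := Finset.mem_erase.2 ⟨hxh, hxH⟩
          have hnot2 : ¬ 2 ≤ (edgeF (H.erase h₀) j x).card := by
            intro hcon
            exact hxA' (Finset.mem_filter.2 ⟨hxH', hcon⟩)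
          rw [edgeF_erase] at hnot2
          have hxe : x ∈ (edgeF H j x).erase h₀ :=
            Finset.mem_erase.2 ⟨hxh, self_mem_edgeF hxH⟩
          have hsing : (edgeF H j x).erase h₀ = {x} := by
            refine Finset.eq_singleton_iff_unique_mem.2 ⟨hxe, fun y hy => ?_⟩
            exact Finset.card_le_one.1 (by omega) y hy x hxe
          have hh₀mem : h₀ ∈ edgeF H j x := by
            by_contra hcon
            rw [Finset.erase_eq_of_notMem hcon] at hsing
            rw [hsing] at hx2
            simp at hx2
          have hagree : ∀ j', j' ≠ j → h₀ j' = x j' := (mem_edgeF.1 hh₀mem).2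
          rw [edgeF_congr hagree]
          exact hsing
        intro a ha b hb
        have := (hkey a ha).symm.trans (hkey b hb)
        exact Finset.singleton_injective this
      calc (A \ A').card ≤ (insert h₀ ((A \ A').erase h₀)).card := Finset.card_le_card hsub
        _ ≤ ((A \ A').erase h₀).card + 1 := Finset.card_insert_le _ _
        _ ≤ 2 := by omega
    have := Finset.card_le_card_sdiff_add_card (s := A) (t := A')
    omega
  · rw [if_neg hP]
    have hsub : A ⊆ A' := by
      intro v hv
      obtain ⟨hvH, hv2⟩ := Finset.mem_filter.1 hv
      have hh₀ : h₀ ∉ edgeF H j v := by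
        intro hcon
        have hagree : ∀ j', j' ≠ j → h₀ j' = v j' := (mem_edgeF.1 hcon).2
        rw [edgeF_congr hagree] at hP
        exact hP hv2
      have hvne : v ≠ h₀ := by
        rintro rfl
        exact hh₀ (self_mem_edgeF hvH)
      refine Finset.mem_filter.2 ⟨Finset.mem_erase.2 ⟨hvne, hvH⟩, ?_⟩
      rw [edgeF_erase, Finset.erase_eq_of_notMem hh₀]
      exact hv2
    have := Finset.card_le_card hsub
    omega

lemma key (H : Finset (Fin n → Fin p))
    (hdc : ∀ h ∈ H, ∀ g : Fin n → Fin p, (∀ i, g i ≤ h i) → g ∈ H) :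
    ∑ v ∈ H, deg H v ≤ 2 * dE H * H.card := by
  induction H using Finset.strongInduction with
  | _ H ih => ?_
  rcases H.eq_empty_or_nonempty with rfl | hne
  · simp
  obtain ⟨h₀, h₀H, hmax⟩ := H.exists_max_image (fun h => ∑ i, (h i).val) hne
  set H' := H.erase h₀ with hH'
  have hssub : H' ⊂ H := Finset.erase_ssubset h₀H
  have hsumlt : ∀ h ∈ H, h ≠ h₀ → (∀ i, h₀ i ≤ h i) → False := by
    intro h hh hne' hle
    have hi : ∃ i, h₀ i ≠ h i := by
      by_contra hcon
      push_neg at hcon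
      exact hne' (funext fun i => (hcon i).symm)
    obtain ⟨i, hi⟩ := hi
    have hstrict : ∑ i, (h₀ i).val < ∑ i, (h i).val := by
      refine Finset.sum_lt_sum (fun i _ => Fin.le_def.1 (hle i)) ⟨i, Finset.mem_univ i, ?_⟩
      exact lt_of_le_of_ne (Fin.le_def.1 (hle i)) (fun hv => hi (Fin.ext hv))
    exact absurd (hmax h hh) (by omega)
  have hdc' : ∀ h ∈ H', ∀ g : Fin n → Fin p, (∀ i, g i ≤ h i) → g ∈ H' := by
    intro h hh g hg
    have hhH : h ∈ H := Finset.mem_of_mem_erase hh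
    refine Finset.mem_erase.2 ⟨?_, hdc h hhH g hg⟩
    rintro rfl
    exact hsumlt h hhH (Finset.mem_erase.1 hh).1 hg
  have hk1 : H'.card + 1 = H.card := Finset.card_erase_add_one h₀H
  have hdE' : dE H' ≤ dE H := dE_mono (Finset.erase_subset _ _)
  have hdeg : deg H h₀ ≤ dE H := by
    have hsub : Finset.univ.filter (fun j : Fin n => 2 ≤ (edgeF H j h₀).card) ⊆
        Finset.univ.filter (fun j : Fin n => (h₀ j).val ≠ 0) := by
      intro j hj
      simp only [Finset.mem_filter, Finset.mem_univ, true_and] at hj ⊢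
      obtain ⟨h, hh, hne2⟩ := Finset.exists_mem_ne hj h₀
      obtain ⟨hhH, hha⟩ := mem_edgeF.1 hh
      have hjne : h j ≠ h₀ j := by
        intro e
        apply hne2
        funext i
        by_cases hi : i = j
        · rw [hi]; exact e
        · exact hha i hi
      have hlt : (h j).val < (h₀ j).val := by
        by_contra hge
        push_neg at hge
        refine hsumlt h hhH hne2 (fun i => ?_)
        by_cases hi : i = j
        · rw [hi]; exact Fin.le_def.2 hge
        · exact le_of_eq (hha i hi).symm
      omega
    calc deg H h₀ ≤ _ := Finset.card_le_card hsub
      _ ≤ dE H := supp_card_le_dE H hdc h₀ h₀H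
  calc ∑ v ∈ H, deg H v
      = ∑ j : Fin n, (H.filter (fun v => 2 ≤ (edgeF H j v).card)).card := sum_deg_eq H
    _ ≤ ∑ j : Fin n, ((H'.filter (fun v => 2 ≤ (edgeF H' j v).card)).card
          + 2 * (if 2 ≤ (edgeF H j h₀).card then 1 else 0)) :=
        Finset.sum_le_sum (fun j _ => count_step h₀H j)
    _ = ∑ j : Fin n, (H'.filter (fun v => 2 ≤ (edgeF H' j v).card)).card
          + 2 * deg H h₀ := by
        rw [Finset.sum_add_distrib, ← Finset.mul_sum]
        congr 1
        unfold deg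
        rw [Finset.card_filter]
    _ = ∑ v ∈ H', deg H' v + 2 * deg H h₀ := by rw [sum_deg_eq H']
    _ ≤ 2 * dE H' * H'.card + 2 * deg H h₀ := by
        exact Nat.add_le_add_right (ih H' hssub hdc') _
    _ ≤ 2 * dE H * H'.card + 2 * dE H := by
        exact Nat.add_le_add (Nat.mul_le_mul_right _ (Nat.mul_le_mul_left 2 hdE'))
          (Nat.mul_le_mul_left 2 hdeg)
    _ = 2 * dE H * H.card := by rw [← hk1]; ring

end AvdAux

/-- A nonempty downward-closed class `H_* ⊆ [p]^n` has average degree at most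
twice its exponential dimension. -/
theorem avd_le_two_dE_of_downwardClosed {n p : ℕ} (H : Finset (Fin n → Fin p))
    (hne : H.Nonempty)
    (hdc : ∀ h ∈ H, ∀ g : Fin n → Fin p, (∀ i, g i ≤ h i) → g ∈ H) :
    avd H ≤ 2 * (dE H : ℚ) := by
  have hcard : (0:ℚ) < H.card := by exact_mod_cast hne.card_pos
  rw [avd, div_le_iff₀ hcard]
  have hkey := AvdAux.key H hdc
  calc (∑ v ∈ H, (deg H v : ℚ)) = ((∑ v ∈ H, deg H v : ℕ) : ℚ) := by push_cast; ring
    _ ≤ ((2 * dE H * H.card : ℕ) : ℚ) := by exact_mod_cast hkey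
    _ = 2 * (dE H : ℚ) * H.card := by push_cast; ring
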